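/- Let ℓ be a real number with 0 < ℓ ≤ 1/2 and let 0 < r ≤ R < ∞. Then there exist constants 0 < m ≤ M such that for every z ∈ ℂ with r ≤ |z| ≤ R, m ≤ |∫₀^ℓ z^t dt| ≤ M, where the integral is over t ∈ [0, ℓ] ⊂ ℝ and z^t is the principal complex power. (Equivalently, the function φ with φ(z) = (z^ℓ − 1)/log z for z ∉ {0, 1} and φ(1) = ℓ is bounded above and bounded away from zero on the annulus {z : r ≤ |z| ≤ R}.) -/

import Mathlib

open Real intervalIntegral

/-- The function `z ↦ ∫₀^ℓ z^t dt` is bounded above and bounded away from zero on any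
annulus `{z : r ≤ |z| ≤ R}`, provided `0 < ℓ ≤ 1/2`. -/
theorem integral_cpow_bounded_on_annulus
    (ℓ : ℝ) (hℓ0 : 0 < ℓ) (hℓ : ℓ ≤ 1 / 2) (r R : ℝ) (hr : 0 < r) (hrR : r ≤ R) :
    ∃ m M : ℝ, 0 < m ∧ m ≤ M ∧ ∀ z : ℂ, r ≤ ‖z‖ → ‖z‖ ≤ R →
      m ≤ ‖∫ t in (0 : ℝ)..ℓ, z ^ (t : ℂ)‖ ∧ ‖∫ t in (0 : ℝ)..ℓ, z ^ (t : ℂ)‖ ≤ M := by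
  have hcos_int : IntervalIntegrable (fun t : ℝ => Real.cos (π * t)) MeasureTheory.volume 0 ℓ :=
    (Real.continuous_cos.comp (continuous_const.mul continuous_id)).intervalIntegrable 0 ℓ
  set I : ℝ := ∫ t in (0:ℝ)..ℓ, Real.cos (π * t) with hI
  have hIpos : 0 < I := by
    apply intervalIntegral_pos_of_pos_on hcos_int _ hℓ0
    intro t ht
    apply Real.cos_pos_of_mem_Ioo
    constructor
    · nlinarith [Real.pi_pos, ht.1, ht.2]
    · nlinarith [Real.pi_pos, ht.1, ht.2]
  set m : ℝ := min 1 r * I with hm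
  set M : ℝ := ℓ * max 1 R with hM
  have hmpos : 0 < m := mul_pos (lt_min one_pos hr) hIpos
  have key : ∀ z : ℂ, r ≤ ‖z‖ → ‖z‖ ≤ R →
      m ≤ ‖∫ t in (0 : ℝ)..ℓ, z ^ (t : ℂ)‖ ∧ ‖∫ t in (0 : ℝ)..ℓ, z ^ (t : ℂ)‖ ≤ M := by
    intro z hzr hzR
    have hz : z ≠ 0 := by
      intro h; rw [h] at hzr; simp at hzr; linarith
    have habs : ∀ t : ℝ, ‖z ^ (t : ℂ)‖ = ‖z‖ ^ t := by
      intro t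
      rw [Complex.norm_cpow_of_ne_zero hz]
      simp
    have hzpos : (0:ℝ) < ‖z‖ := lt_of_lt_of_le hr hzr
    have hbound : ∀ t ∈ Set.Icc (0:ℝ) 1, ‖z‖ ^ t ≤ max 1 R := by
      intro t ht
      rcases le_or_gt 1 (‖z‖) with h1 | h1
      · calc ‖z‖ ^ t ≤ ‖z‖ ^ (1:ℝ) :=
              Real.rpow_le_rpow_of_exponent_le h1 ht.2
          _ = ‖z‖ := Real.rpow_one _
          _ ≤ max 1 R := le_max_of_le_right hzR
      · exact le_trans (Real.rpow_le_one hzpos.le h1.le ht.1) (le_max_left _ _)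
    have hlow : ∀ t ∈ Set.Icc (0:ℝ) 1, min 1 r ≤ ‖z‖ ^ t := by
      intro t ht
      rcases le_or_gt 1 (‖z‖) with h1 | h1
      · exact le_trans (min_le_left _ _) (Real.one_le_rpow h1 ht.1)
      · calc min 1 r ≤ r := min_le_right _ _
          _ ≤ ‖z‖ := hzr
          _ = ‖z‖ ^ (1:ℝ) := (Real.rpow_one _).symm
          _ ≤ ‖z‖ ^ t := Real.rpow_le_rpow_of_exponent_ge hzpos h1.le ht.2
    have hcont : Continuous fun t : ℝ => z ^ (t : ℂ) := by
      have : (fun t : ℝ => z ^ (t : ℂ)) = fun t : ℝ => Complex.exp ((t : ℂ) * Complex.log z) := by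
        funext t; rw [Complex.cpow_def_of_ne_zero hz]; ring_nf
      rw [this]
      exact Complex.continuous_exp.comp ((Complex.continuous_ofReal).mul continuous_const)
    have hint : IntervalIntegrable (fun t : ℝ => z ^ (t : ℂ)) MeasureTheory.volume 0 ℓ :=
      hcont.intervalIntegrable 0 ℓ
    constructor
    · -- lower bound via real part
      have hre : (∫ t in (0:ℝ)..ℓ, z ^ (t : ℂ)).re
          = ∫ t in (0:ℝ)..ℓ, (z ^ (t : ℂ)).re := by
        exact (Complex.reCLM.intervalIntegral_comp_comm hint).symm
      have hreval : ∀ t : ℝ, (z ^ (t : ℂ)).re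
          = ‖z‖ ^ t * Real.cos (t * Complex.arg z) := by
        intro t
        rw [Complex.cpow_def_of_ne_zero hz, Complex.exp_re]
        congr 1
        · rw [Real.rpow_def_of_pos hzpos]
          congr 1
          simp [Complex.log_re, mul_comm]
        · congr 1
          simp [Complex.log_im, mul_comm]
      have hptwise : ∀ t ∈ Set.Icc (0:ℝ) ℓ,
          min 1 r * Real.cos (π * t) ≤ (z ^ (t : ℂ)).re := by
        intro t ht
        rw [hreval t]
        have ht1 : t ∈ Set.Icc (0:ℝ) 1 := ⟨ht.1, le_trans ht.2 (by linarith)⟩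
        have harg := Complex.abs_arg_le_pi z
        have h1 : |t * Complex.arg z| ≤ π * t := by
          rw [abs_mul, abs_of_nonneg ht.1]
          calc t * |Complex.arg z| ≤ t * π := by
                exact mul_le_mul_of_nonneg_left harg ht.1
            _ = π * t := mul_comm _ _
        have hπt : π * t ≤ π := by
          nlinarith [Real.pi_pos, ht.2]
        have hcosle : Real.cos (π * t) ≤ Real.cos (t * Complex.arg z) := by
          rw [← Real.cos_abs (t * Complex.arg z)]
          exact Real.cos_le_cos_of_nonneg_of_le_pi (abs_nonneg _) hπt h1
        have hcosnn : 0 ≤ Real.cos (π * t) := by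
          apply Real.cos_nonneg_of_mem_Icc
          constructor
          · nlinarith [Real.pi_pos, ht.1]
          · nlinarith [Real.pi_pos, ht.2]
        have := hlow t ht1
        calc min 1 r * Real.cos (π * t)
            ≤ ‖z‖ ^ t * Real.cos (t * Complex.arg z) := by
              apply mul_le_mul this hcosle hcosnn (Real.rpow_nonneg hzpos.le t)
          _ = _ := rfl
      have hre_int : IntervalIntegrable (fun t : ℝ => (z ^ (t : ℂ)).re)
          MeasureTheory.volume 0 ℓ :=
        (Complex.continuous_re.comp hcont).intervalIntegrable 0 ℓ
      have hmono : ∫ t in (0:ℝ)..ℓ, min 1 r * Real.cos (π * t)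
          ≤ ∫ t in (0:ℝ)..ℓ, (z ^ (t : ℂ)).re :=
        integral_mono_on hℓ0.le (hcos_int.const_mul _) hre_int hptwise
      have hconst : ∫ t in (0:ℝ)..ℓ, min 1 r * Real.cos (π * t) = m := by
        rw [intervalIntegral.integral_const_mul]
      calc m ≤ (∫ t in (0:ℝ)..ℓ, z ^ (t : ℂ)).re := by
            rw [hre, ← hconst]; exact hmono
        _ ≤ ‖∫ t in (0:ℝ)..ℓ, z ^ (t : ℂ)‖ := Complex.re_le_norm _
    · -- upper bound
      have : ‖∫ t in (0:ℝ)..ℓ, z ^ (t : ℂ)‖ ≤ max 1 R * |ℓ - 0| := by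
        apply intervalIntegral.norm_integral_le_of_norm_le_const
        intro t ht
        rw [Set.uIoc_of_le hℓ0.le] at ht
        rw [habs t]
        exact hbound t ⟨ht.1.le, le_trans ht.2 (by linarith)⟩
      calc ‖∫ t in (0:ℝ)..ℓ, z ^ (t : ℂ)‖ ≤ max 1 R * |ℓ - 0| := this
        _ = M := by rw [hM, sub_zero, abs_of_pos hℓ0, mul_comm]
  refine ⟨m, M, hmpos, ?_, key⟩
  have := key (r : ℂ) (by simp [abs_of_pos hr]) (by simp [abs_of_pos hr]; exact hrR)
  exact le_trans this.1 this.2
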